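/- arXiv:1511.01532 — 7 statements merged into one kernel-verified Lean document; each statement's English description precedes it below -/
import Mathlib

section
/- In an approximate categorical structure, for any x,y ∈ X and f,g ∈ A(x,y), d(f,1_y,g) = d(1_x,f,g). -/
/-- An approximate categorical structure (AC structure): a graph with identities
and a triangular distance function satisfying the identity axioms and the
left/right associativity (tetrahedral) inequalities. -/
structure ACStruct where
  Obj : Type
  Hom : Obj → Obj → Type
  ident : ∀ x, Hom x x
  d : ∀ {x y z}, Hom x y → Hom y z → Hom x z → ℝ
  left_ident : ∀ {x y} (f : Hom x y), d f (ident y) f = 0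
  right_ident : ∀ {x y} (f : Hom x y), d (ident x) f f = 0
  left_assoc : ∀ {x y z w} (f : Hom x y) (g : Hom y z) (h : Hom z w)
      (a : Hom x z) (b : Hom y w) (c : Hom x w),
      d a h c ≤ d f g a + d g h b + d f b c
  right_assoc : ∀ {x y z w} (f : Hom x y) (g : Hom y z) (h : Hom z w)
      (a : Hom x z) (b : Hom y w) (c : Hom x w),
      d f b c ≤ d f g a + d g h b + d a h c

/-- The induced pseudometric on arrow sets: φ(f,g) := d(1_x, f, g). -/
noncomputable def ACStruct.φ (S : ACStruct) {x y : S.Obj} (f g : S.Hom x y) : ℝ :=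
  S.d (S.ident x) f g

theorem stmt4 (S : ACStruct) {x y : S.Obj} (f g : S.Hom x y) :
    S.d f (S.ident y) g = S.d (S.ident x) f g := by
  have h1 := S.left_assoc (S.ident x) f (S.ident y) f f g
  have h2 := S.right_assoc (S.ident x) f (S.ident y) f f g
  simp [S.left_ident, S.right_ident] at h1 h2
  linarith
end

section
/- In an approximate categorical structure, the function φ(f,g) := d(1_x,f,g) on each arrow set A(x,y) is a pseudometric: φ(f,f)=0, φ(f,g)=φ(g,f), and φ(f,g) ≤ φ(f,h)+φ(h,g). -/
theorem stmt5 (S : ACStruct) {x y : S.Obj} :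
    (∀ f : S.Hom x y, S.φ f f = 0) ∧
    (∀ f g : S.Hom x y, S.φ f g = S.φ g f) ∧
    (∀ f g h : S.Hom x y, S.φ f g ≤ S.φ f h + S.φ h g) := by
  have key : ∀ h b c : S.Hom x y, S.φ b c ≤ S.φ h b + S.φ h c := by
    intro h b c
    have := S.right_assoc (S.ident x) (S.ident x) h (S.ident x) b c
    have h0 : S.d (S.ident x) (S.ident x) (S.ident x) = 0 := S.right_ident _
    simpa [ACStruct.φ, h0] using this
  have refl0 : ∀ f : S.Hom x y, S.φ f f = 0 := fun f => S.right_ident f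
  have symm : ∀ f g : S.Hom x y, S.φ f g = S.φ g f := by
    intro f g
    have h1 := key g f g
    have h2 := key f g f
    rw [refl0] at h1 h2
    linarith
  refine ⟨refl0, symm, fun f g h => ?_⟩
  have := key h f g
  rw [symm h f] at this
  exact this
end

section
/- In an approximate categorical structure, given f,f' ∈ A(x,y), g,g' ∈ A(y,z) and h,h' ∈ A(x,z), we have d(f,g,h) ≤ d(f',g',h') + φ(f,f') + φ(g,g') + φ(h,h'). -/
lemma ACStruct.phi_self (S : ACStruct) {x y : S.Obj} (f : S.Hom x y) : S.φ f f = 0 :=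
  S.right_ident f

/-- change the middle argument -/
lemma ACStruct.mid (S : ACStruct) {x y z : S.Obj} (f : S.Hom x y) (b h : S.Hom y z)
    (c : S.Hom x z) : S.d f b c ≤ S.d f h c + S.φ h b := by
  have := S.right_assoc f (S.ident y) h f b c
  have hli := S.left_ident f
  unfold ACStruct.φ
  linarith

lemma ACStruct.phi_symm (S : ACStruct) {x y : S.Obj} (b c : S.Hom x y) :
    S.φ b c ≤ S.φ c b := by
  have := S.mid (S.ident x) b c c
  have h0 : S.d (S.ident x) c c = 0 := S.right_ident c
  unfold ACStruct.φ at *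
  linarith

/-- change the first argument -/
lemma ACStruct.first (S : ACStruct) {x y z : S.Obj} (a g : S.Hom x y) (h : S.Hom y z)
    (c : S.Hom x z) : S.d a h c ≤ S.d g h c + S.φ g a := by
  have := S.left_assoc (S.ident x) g h a c c
  have h0 : S.d (S.ident x) c c = 0 := S.right_ident c
  unfold ACStruct.φ
  linarith

/-- change the third argument -/
lemma ACStruct.third (S : ACStruct) {x y z : S.Obj} (g : S.Hom x y) (h : S.Hom y z)
    (b c : S.Hom x z) : S.d g h c ≤ S.d g h b + S.φ b c := by
  have := S.left_assoc (S.ident x) g h g b c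
  have h0 : S.d (S.ident x) g g = 0 := S.right_ident g
  unfold ACStruct.φ
  linarith

theorem stmt9 (S : ACStruct) {x y z : S.Obj}
    (f f' : S.Hom x y) (g g' : S.Hom y z) (h h' : S.Hom x z) :
    S.d f g h ≤ S.d f' g' h' + S.φ f f' + S.φ g g' + S.φ h h' := by
  have h1 := S.first f f' g h
  have h2 := S.mid f' g g' h
  have h3 := S.third f' g' h' h
  have s1 := S.phi_symm f' f
  have s2 := S.phi_symm g' g
  have s3 := S.phi_symm h' h
  linarith
end

section
/- In an approximate categorical structure, given f ∈ A(x,y), g ∈ A(y,z) and a,a' ∈ A(x,z), we have φ(a,a') ≤ d(f,g,a) + d(f,g,a'). -/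
theorem stmt10 (S : ACStruct) {x y z : S.Obj}
    (f : S.Hom x y) (g : S.Hom y z) (a a' : S.Hom x z) :
    S.φ a a' ≤ S.d f g a + S.d f g a' := by
  have h := S.right_assoc (S.ident x) f g f a a'
  simpa [ACStruct.φ, S.right_ident f] using h
end

section
/- Let (X,A,d) be a separated 0-categoric AC structure: for any f ∈ A(x,y), g ∈ A(y,z) there is h ∈ A(x,z) with d(f,g,h)=0. Then this h is unique (denoted g∘f), the operation ∘ is associative with units 1_x, and composition is nonincreasing: φ(g∘f, g'∘f') ≤ φ(f,f') + φ(g,g'). -/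
theorem stmt15 (S : ACStruct)
    (sep : ∀ {x y : S.Obj} (f f' : S.Hom x y), S.φ f f' = 0 → f = f')
    (cat0 : ∀ {x y z : S.Obj} (f : S.Hom x y) (g : S.Hom y z),
      ∃ h : S.Hom x z, S.d f g h = 0) :
    ∃ comp : ∀ x y z : S.Obj, S.Hom x y → S.Hom y z → S.Hom x z,
      (∀ (x y z : S.Obj) (f : S.Hom x y) (g : S.Hom y z),
        S.d f g (comp x y z f g) = 0) ∧
      (∀ (x y z : S.Obj) (f : S.Hom x y) (g : S.Hom y z) (h : S.Hom x z),
        S.d f g h = 0 → h = comp x y z f g) ∧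
      (∀ (x y : S.Obj) (f : S.Hom x y), comp x y y f (S.ident y) = f) ∧
      (∀ (x y : S.Obj) (f : S.Hom x y), comp x x y (S.ident x) f = f) ∧
      (∀ (x y z w : S.Obj) (f : S.Hom x y) (g : S.Hom y z) (h : S.Hom z w),
        comp x z w (comp x y z f g) h = comp x y w f (comp y z w g h)) ∧
      (∀ (x y z : S.Obj) (f f' : S.Hom x y) (g g' : S.Hom y z),
        S.φ (comp x y z f g) (comp x y z f' g') ≤ S.φ f f' + S.φ g g') := by
  classical
  set comp : ∀ x y z : S.Obj, S.Hom x y → S.Hom y z → S.Hom x z :=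
    fun x y z f g => (cat0 f g).choose with hc
  have hcomp : ∀ (x y z : S.Obj) (f : S.Hom x y) (g : S.Hom y z),
      S.d f g (comp x y z f g) = 0 := fun x y z f g => (cat0 f g).choose_spec
  have nonneg : ∀ {x y z : S.Obj} (f : S.Hom x y) (g : S.Hom y z) (a : S.Hom x z),
      0 ≤ S.d f g a := by
    intro x y z f g a
    have h := S.left_assoc f g (S.ident z) a g a
    rw [S.left_ident, S.left_ident] at h
    linarith
  have key : ∀ {x y z : S.Obj} (f : S.Hom x y) (g : S.Hom y z) (h' : S.Hom x z),
      S.φ (comp x y z f g) h' ≤ S.d f g h' := by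
    intro x y z f g h'
    have h := S.right_assoc (S.ident x) f g f (comp x y z f g) h'
    rw [S.right_ident] at h
    have h2 := hcomp x y z f g
    simp only [ACStruct.φ]
    linarith
  have uniq : ∀ (x y z : S.Obj) (f : S.Hom x y) (g : S.Hom y z) (h : S.Hom x z),
      S.d f g h = 0 → h = comp x y z f g := by
    intro x y z f g h hh
    have h1 := key f g h
    rw [hh] at h1
    have h2 : 0 ≤ S.φ (comp x y z f g) h := nonneg _ _ _
    exact (sep _ _ (le_antisymm h1 h2)).symm
  refine ⟨comp, hcomp, uniq, ?_, ?_, ?_, ?_⟩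
  · intro x y f
    exact (uniq x y y f (S.ident y) f (S.left_ident f)).symm
  · intro x y f
    exact (uniq x x y (S.ident x) f f (S.right_ident f)).symm
  · intro x y z w f g h
    have h1 := S.left_assoc f g h (comp x y z f g) (comp y z w g h)
      (comp x y w f (comp y z w g h))
    rw [hcomp, hcomp, hcomp] at h1
    have h2 : 0 ≤ S.d (comp x y z f g) h (comp x y w f (comp y z w g h)) := nonneg _ _ _
    have h3 : S.d (comp x y z f g) h (comp x y w f (comp y z w g h)) = 0 := by linarith
    exact (uniq _ _ _ _ _ _ h3).symm
  · intro x y z f f' g g'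
    have h1 := S.right_assoc (S.ident x) f g f' (comp x y z f g) (comp x y z f' g')
    rw [hcomp] at h1
    have h2 := S.left_assoc f' (S.ident y) g f' g' (comp x y z f' g')
    rw [S.left_ident] at h2
    have h3 := hcomp x y z f' g'
    simp only [ACStruct.φ]
    linarith
end

section
/- Suppose an AC structure (X,A,d) is ε-categoric for every ε>0 (for all f ∈ A(x,y), g ∈ A(y,z) and ε>0 there exists h ∈ A(x,z) with d(f,g,h) ≤ ε) and each (A(x,y),φ) is a complete pseudometric space. Then (X,A,d) is 0-categoric: for all composable f,g there exists h with d(f,g,h)=0. -/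
theorem stmt16 (S : ACStruct)
    (epcat : ∀ {x y z : S.Obj} (f : S.Hom x y) (g : S.Hom y z) (ε : ℝ), 0 < ε →
      ∃ h : S.Hom x z, S.d f g h ≤ ε)
    (complete : ∀ {x y : S.Obj} (u : ℕ → S.Hom x y),
      (∀ ε : ℝ, 0 < ε → ∃ N : ℕ, ∀ m n : ℕ, N ≤ m → N ≤ n → S.φ (u m) (u n) < ε) →
      ∃ l : S.Hom x y, ∀ ε : ℝ, 0 < ε → ∃ N : ℕ, ∀ n : ℕ, N ≤ n → S.φ (u n) l < ε) :
    ∀ {x y z : S.Obj} (f : S.Hom x y) (g : S.Hom y z),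
      ∃ h : S.Hom x z, S.d f g h = 0 := by
  intro x y z f g
  have hseq : ∀ n : ℕ, ∃ h : S.Hom x z, S.d f g h ≤ 1/(n+1) := fun n =>
    epcat f g (1/(n+1)) (by positivity)
  choose u hu using hseq
  have key : ∀ m n : ℕ, S.φ (u m) (u n) ≤ 1/(m+1) + 1/(n+1) := by
    intro m n
    have h1 := S.right_assoc (S.ident x) f g f (u m) (u n)
    have h2 := S.right_ident f
    have := hu m; have := hu n
    unfold ACStruct.φ
    linarith
  have cauchy : ∀ ε : ℝ, 0 < ε → ∃ N : ℕ, ∀ m n : ℕ, N ≤ m → N ≤ n →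
      S.φ (u m) (u n) < ε := by
    intro ε hε
    obtain ⟨N, hN⟩ := exists_nat_gt (2/ε)
    refine ⟨N, fun m n hm hn => ?_⟩
    have hm1 : 1/((m:ℝ)+1) < ε/2 := by
      rw [div_lt_div_iff₀ (by positivity) (by norm_num)]
      have : (2:ℝ)/ε < (m:ℝ)+1 := lt_of_lt_of_le hN (by exact_mod_cast Nat.le_succ_of_le hm)
      rw [div_lt_iff₀ hε] at this
      linarith
    have hn1 : 1/((n:ℝ)+1) < ε/2 := by
      rw [div_lt_div_iff₀ (by positivity) (by norm_num)]
      have : (2:ℝ)/ε < (n:ℝ)+1 := lt_of_lt_of_le hN (by exact_mod_cast Nat.le_succ_of_le hn)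
      rw [div_lt_iff₀ hε] at this
      linarith
    have := key m n
    linarith
  obtain ⟨l, hl⟩ := complete u cauchy
  refine ⟨l, le_antisymm ?_ ?_⟩
  · by_contra h
    push_neg at h
    obtain ⟨N, hN⟩ := hl (S.d f g l / 2) (by linarith)
    obtain ⟨M, hM⟩ := exists_nat_gt (2 / S.d f g l)
    set n := max N M with hn
    have h1 := S.left_assoc (S.ident x) f g f (u n) l
    have h2 := S.right_ident f
    have h3 := hu n
    have h4 := hN n (le_max_left _ _)
    have h5 : 1/((n:ℝ)+1) < S.d f g l / 2 := by
      rw [div_lt_div_iff₀ (by positivity) (by norm_num)]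
      have hMn : (2:ℝ) / S.d f g l < (n:ℝ)+1 :=
        lt_of_lt_of_le hM (by exact_mod_cast Nat.le_succ_of_le (le_max_right N M))
      rw [div_lt_iff₀ h] at hMn
      linarith
    unfold ACStruct.φ at h4
    linarith
  · have h1 := S.left_assoc (S.ident x) f g f l l
    have h2 := S.right_assoc (S.ident x) f g f l l
    have h3 := S.right_ident f
    linarith
end

section
/- If an AC structure (X,A,d) is ε-categoric for every ε>0, then it is absolutely left transitive: for all f ∈ A(x,y), g ∈ A(y,z), h ∈ A(z,w), k ∈ A(y,w), l ∈ A(x,w), we have inf over a ∈ A(x,z) of (d(f,g,a) + d(a,h,l)) ≤ d(g,h,k) + d(f,k,l). -/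
theorem stmt17 (S : ACStruct)
    (epcat : ∀ {x y z : S.Obj} (f : S.Hom x y) (g : S.Hom y z) (ε : ℝ), 0 < ε →
      ∃ h : S.Hom x z, S.d f g h ≤ ε)
    {x y z w : S.Obj} (f : S.Hom x y) (g : S.Hom y z) (h : S.Hom z w)
    (k : S.Hom y w) (l : S.Hom x w) :
    sInf {r : ℝ | ∃ a : S.Hom x z, r = S.d f g a + S.d a h l}
      ≤ S.d g h k + S.d f k l := by
  have hbdd : BddBelow {r : ℝ | ∃ a : S.Hom x z, r = S.d f g a + S.d a h l} := by
    refine ⟨S.d f k l - S.d g h k, ?_⟩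
    rintro r ⟨a, rfl⟩
    have := S.right_assoc f g h a k l
    linarith
  refine le_of_forall_pos_le_add fun ε hε => ?_
  obtain ⟨a, ha⟩ := epcat f g (ε / 2) (by linarith)
  have h2 : S.d a h l ≤ S.d f g a + S.d g h k + S.d f k l := S.left_assoc f g h a k l
  calc sInf {r : ℝ | ∃ a : S.Hom x z, r = S.d f g a + S.d a h l}
      ≤ S.d f g a + S.d a h l := csInf_le hbdd ⟨a, rfl⟩
    _ ≤ S.d g h k + S.d f k l + ε := by linarith
end
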